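/- arXiv:1802.04419 — 3 statements merged into one kernel-verified Lean document; each statement's English description precedes it below -/
import Mathlib

section
/- Let R be a commutative ring, a, b ∈ R, and let H be a 4×4 matrix over R such that every entry of the second row of H is divisible by a, every entry of the third row is divisible by b, and every entry of the fourth row is divisible by a·b. Then every entry of the adjugate matrix adj(H) is divisible by a·b. -/
lemma dvd_det_of_row_dvd {n : Type*} [Fintype n] [DecidableEq n] {R : Type*} [CommRing R]
    (A : Matrix n n R) (r : n) (c : R) (h : ∀ j, c ∣ A r j) : c ∣ A.det := by
  choose v hv using h
  have hA : A = A.updateRow r (c • v) := by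
    ext i j
    by_cases hi : i = r <;> simp [Matrix.updateRow_apply, hi, hv]
  rw [hA, Matrix.det_updateRow_smul]
  exact Dvd.intro _ rfl

lemma dvd_det_of_two_rows_dvd {n : Type*} [Fintype n] [DecidableEq n] {R : Type*} [CommRing R]
    (A : Matrix n n R) (r s : n) (hrs : s ≠ r) (a b : R)
    (ha : ∀ j, a ∣ A r j) (hb : ∀ j, b ∣ A s j) : a * b ∣ A.det := by
  choose v hv using ha
  have hA : A = A.updateRow r (a • v) := by
    ext i j
    by_cases hi : i = r <;> simp [Matrix.updateRow_apply, hi, hv]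
  rw [hA, Matrix.det_updateRow_smul]
  refine mul_dvd_mul_left a (dvd_det_of_row_dvd _ s b ?_)
  intro j
  rw [Matrix.updateRow_ne hrs]
  exact hb j

/-- Divisibility of the adjugate: if the second row of a 4×4 matrix is divisible by `a`,
the third row by `b`, and the fourth row by `a*b`, then every entry of the adjugate
is divisible by `a*b`. -/
theorem adjugate_dvd_of_rows_dvd {R : Type*} [CommRing R] (a b : R)
    (H : Matrix (Fin 4) (Fin 4) R)
    (h1 : ∀ j, a ∣ H 1 j) (h2 : ∀ j, b ∣ H 2 j) (h3 : ∀ j, a * b ∣ H 3 j) :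
    ∀ i j, a * b ∣ H.adjugate i j := by
  intro i j
  rw [Matrix.adjugate_apply]
  by_cases hj : j = 3
  · subst hj
    refine dvd_det_of_two_rows_dvd _ 1 2 (by decide) a b ?_ ?_ <;> intro k
    · rw [Matrix.updateRow_ne (by decide : (1 : Fin 4) ≠ 3)]; exact h1 k
    · rw [Matrix.updateRow_ne (by decide : (2 : Fin 4) ≠ 3)]; exact h2 k
  · refine dvd_det_of_row_dvd _ 3 (a * b) ?_
    intro k
    rw [Matrix.updateRow_ne (Ne.symm hj)]
    exact h3 k
end

section
/- Let K be a field and let M be a 2-dimensional subspace of K⁴ with basis {u, v}. For each i ∈ ℤ/4ℤ, suppose given m⁽ⁱ⁾ ∈ M whose i-th coordinate vanishes, and suppose that for all i the (i+1)-th coordinate of m⁽ⁱ⁾ equals the negative of the i-th coordinate of m⁽ⁱ⁺¹⁾ and that this common value is nonzero. Then, writing m⁽ⁱ⁾ = c_i·(u_i v − v_i u) (which is possible since u_i v − v_i u spans the line { x ∈ M : x_i = 0 }), the scalars c₁, c₂, c₃, c₄ are all equal. -/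
/-- Key linear algebra step in the construction of the rank-2 Beilinson–Flach class:
if `m⁽ⁱ⁾ = c_i (u_i v − v_i u)` have vanishing `i`-th coordinate, and the `(i+1)`-th
coordinate of `m⁽ⁱ⁾` is the negative of the `i`-th coordinate of `m⁽ⁱ⁺¹⁾` and nonzero,
then all the scalars `c_i` coincide. -/
theorem scalars_all_equal {K : Type*} [Field K]
    (u v : Fin 4 → K) (hindep : LinearIndependent K ![u, v])
    (m : Fin 4 → (Fin 4 → K)) (c : Fin 4 → K)
    (hm : ∀ i, m i = c i • (u i • v - v i • u))
    (hzero : ∀ i, m i i = 0)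
    (hanti : ∀ i : Fin 4, m i (i + 1) = - m (i + 1) i)
    (hne : ∀ i : Fin 4, m i (i + 1) ≠ 0) :
    ∀ i j : Fin 4, c i = c j := by
  have step : ∀ i : Fin 4, c i = c (i + 1) := by
    intro i
    have h := hanti i
    have hn := hne i
    simp only [hm, Pi.smul_apply, Pi.sub_apply, smul_eq_mul] at h hn
    have hd : u i * v (i + 1) - v i * u (i + 1) ≠ 0 := by
      intro hd0
      apply hn
      rw [hd0]; ring
    have : c i * (u i * v (i + 1) - v i * u (i + 1))
        = c (i + 1) * (u i * v (i + 1) - v i * u (i + 1)) := by linear_combination h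
    exact mul_right_cancel₀ hd this
  have h01 : c 0 = c 1 := step 0
  have h12 : c 1 = c 2 := step 1
  have h23 : c 2 = c 3 := step 2
  clear step hm hzero hanti hne hindep
  intro i j
  fin_cases i <;> fin_cases j <;> simp_all
end

section
/- Let R be a commutative ring, σ : R → R a ring homomorphism extended entrywise to matrices, and I ⊆ R an ideal. Suppose M, A, P are n×n matrices over R with M = A·σ(M)·P^{−1} (P invertible) and M ≡ I_n (mod I). Then for every m ≥ 1, M ≡ A^m · σ^{m−1}(P^{−1}) ⋯ σ(P^{−1}) · P^{−1} (mod σ^m(I)·R), where σ^m(I)·R denotes the ideal generated by σ^m(I), provided σ^m(M) ≡ I_n (mod σ^m(I)·R). -/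
/-- Congruence for the Wach-module change of basis matrix: if `M = A·σ(M)·P⁻¹`,
`σ(A) = A` and `M ≡ 1 (mod I)`, then, provided `σ^m(M) ≡ 1` modulo the ideal generated
by `σ^m(I)`, we have `M ≡ A^m · σ^{m−1}(P⁻¹) ⋯ σ(P⁻¹) · P⁻¹` modulo that ideal. -/
theorem wach_congruence {R : Type*} [CommRing R] {n : ℕ}
    (σ : R →+* R) (I : Ideal R)
    (M A P Pinv : Matrix (Fin n) (Fin n) R)
    (hP : P * Pinv = 1) (hP' : Pinv * P = 1)
    (hA : A.map σ = A)
    (hrel : M = A * M.map σ * Pinv)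
    (hM : ∀ i j, (M - 1) i j ∈ I) :
    ∀ m : ℕ, 1 ≤ m →
      (∀ i j, (M.map ((⇑σ)^[m]) - 1) i j ∈ Ideal.span ((⇑σ)^[m] '' I)) →
      ∀ i j,
        (M - A ^ m *
          ((List.range m).map (fun i => Pinv.map ((⇑σ)^[m - 1 - i]))).prod) i j
          ∈ Ideal.span ((⇑σ)^[m] '' I) := by
  have hAm : ∀ m : ℕ, (A ^ m).map σ = A ^ m := by
    intro m
    induction m with
    | zero => simp [Matrix.map_one σ (map_zero σ) (map_one σ)]
    | succ k ih => rw [pow_succ, Matrix.map_mul, ih, hA]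
  have key : ∀ m : ℕ, M = A ^ m * M.map ((⇑σ)^[m]) *
      ((List.range m).map (fun i => Pinv.map ((⇑σ)^[m - 1 - i]))).prod := by
    intro m
    induction m with
    | zero => simp
    | succ k ih =>
      have hL : (((List.range k).map
            (fun i => Pinv.map ((⇑σ)^[k - 1 - i]))).prod).map ⇑σ * Pinv =
          ((List.range (k+1)).map (fun i => Pinv.map ((⇑σ)^[k + 1 - 1 - i]))).prod := by
        have h1 : (((List.range k).map
            (fun i => Pinv.map ((⇑σ)^[k - 1 - i]))).prod).map ⇑σ =
            ((List.range k).map (fun i => Pinv.map ((⇑σ)^[k - i]))).prod := by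
          rw [← RingHom.mapMatrix_apply, map_list_prod, List.map_map]
          congr 1
          apply List.map_congr_left
          intro i hi
          simp only [Function.comp_apply, RingHom.mapMatrix_apply, Matrix.map_map]
          simp only [List.mem_range] at hi
          have : k - i = (k - 1 - i) + 1 := by omega
          rw [this, Function.iterate_succ']
        rw [h1, List.range_succ, List.map_append, List.prod_append]
        simp only [List.map_cons, List.map_nil, List.prod_cons, List.prod_nil, mul_one]
        have h2 : k + 1 - 1 - k = 0 := by omega
        rw [h2]
        simp only [Function.iterate_zero, Matrix.map_id, id]
        congr 1
      calc M = A * M.map ⇑σ * Pinv := hrel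
        _ = A * (A ^ k * M.map ((⇑σ)^[k]) *
              ((List.range k).map (fun i => Pinv.map ((⇑σ)^[k - 1 - i]))).prod).map ⇑σ * Pinv := by
            rw [← ih]
        _ = A ^ (k+1) * M.map ((⇑σ)^[k+1]) *
              ((List.range (k+1)).map (fun i => Pinv.map ((⇑σ)^[k + 1 - 1 - i]))).prod := by
            rw [Matrix.map_mul, Matrix.map_mul, hAm, Matrix.map_map,
              ← Function.iterate_succ' (⇑σ) k, ← hL, pow_succ']
            noncomm_ring
  intro m _ hm i j
  have hEq : M - A ^ m *
      ((List.range m).map (fun i => Pinv.map ((⇑σ)^[m - 1 - i]))).prod =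
      A ^ m * (M.map ((⇑σ)^[m]) - 1) *
      ((List.range m).map (fun i => Pinv.map ((⇑σ)^[m - 1 - i]))).prod := by
    rw [mul_sub, mul_one, sub_mul, ← key m]
  rw [hEq, Matrix.mul_apply]
  refine Ideal.sum_mem _ fun k _ => ?_
  rw [Matrix.mul_apply, Finset.sum_mul]
  exact Ideal.sum_mem _ fun l _ =>
    Ideal.mul_mem_right _ _ (Ideal.mul_mem_left _ _ (hm l k))
end
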